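/- For every natural number n, P_n(x) = ∑_{k=0}^{n} binom(n,k) · b^{n−k} · Q̃_k(x) in ℝ[x]; that is, the Laurent biorthogonal polynomials P_n are the b-th binomial transform of the orthogonal polynomials Q̃_n. -/
import Mathlib

open Polynomial Finset

/-- Pascal-style splitting of the binomial-transform sum. -/
lemma pascal_sum_aux (b : ℝ) (Q : ℕ → Polynomial ℝ) (m : ℕ) :
    ∑ k ∈ Finset.range (m + 2),
        Polynomial.C (((m + 1).choose k : ℝ) * b ^ (m + 1 - k)) * Q k
    = Polynomial.C b *
        (∑ k ∈ Finset.range (m + 1),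
          Polynomial.C ((m.choose k : ℝ) * b ^ (m - k)) * Q k)
      + ∑ k ∈ Finset.range (m + 1),
          Polynomial.C ((m.choose k : ℝ) * b ^ (m - k)) * Q (k + 1) := by
  rw [Finset.sum_range_succ' _ (m + 1)]
  have hsplit : ∀ k ∈ Finset.range (m + 1),
      Polynomial.C (((m + 1).choose (k + 1) : ℝ) * b ^ (m + 1 - (k + 1))) * Q (k + 1)
      = Polynomial.C ((m.choose (k + 1) : ℝ) * b ^ (m - k)) * Q (k + 1)
        + Polynomial.C ((m.choose k : ℝ) * b ^ (m - k)) * Q (k + 1) := by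
    intro k hk
    have h1 : m + 1 - (k + 1) = m - k := by omega
    rw [h1, Nat.choose_succ_succ]
    push_cast
    rw [add_mul, map_add, add_mul]
    ring
  rw [Finset.sum_congr rfl hsplit, Finset.sum_add_distrib]
  have hU : ∑ k ∈ Finset.range (m + 1),
      Polynomial.C ((m.choose (k + 1) : ℝ) * b ^ (m - k)) * Q (k + 1)
      + Polynomial.C (((m + 1).choose 0 : ℝ) * b ^ (m + 1 - 0)) * Q 0
    = Polynomial.C b *
        ∑ k ∈ Finset.range (m + 1),
          Polynomial.C ((m.choose k : ℝ) * b ^ (m - k)) * Q k := by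
    rw [Finset.mul_sum, Finset.sum_range_succ' (fun k =>
      Polynomial.C b * (Polynomial.C ((m.choose k : ℝ) * b ^ (m - k)) * Q k)) m]
    rw [Finset.sum_range_succ]
    have hlast : ((m.choose (m + 1) : ℝ) * b ^ (m - m)) = 0 := by
      simp [Nat.choose_succ_self]
    rw [hlast]
    simp only [Polynomial.C_0, zero_mul, add_zero, Nat.choose_zero_right, Nat.sub_zero,
      Nat.cast_one, one_mul]
    congr 1
    · apply Finset.sum_congr rfl
      intro k hk
      have hk' : k < m := Finset.mem_range.mp hk
      have h2 : m - k = (m - (k + 1)) + 1 := by omega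
      rw [h2, pow_succ]
      simp only [Polynomial.C_mul]
      ring
    · simp only [pow_succ, Polynomial.C_mul]
      ring
  calc ∑ k ∈ Finset.range (m + 1),
        Polynomial.C ((m.choose (k + 1) : ℝ) * b ^ (m - k)) * Q (k + 1)
      + ∑ k ∈ Finset.range (m + 1),
        Polynomial.C ((m.choose k : ℝ) * b ^ (m - k)) * Q (k + 1)
      + Polynomial.C (((m + 1).choose 0 : ℝ) * b ^ (m + 1 - 0)) * Q 0
      = (∑ k ∈ Finset.range (m + 1),
          Polynomial.C ((m.choose (k + 1) : ℝ) * b ^ (m - k)) * Q (k + 1)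
        + Polynomial.C (((m + 1).choose 0 : ℝ) * b ^ (m + 1 - 0)) * Q 0)
      + ∑ k ∈ Finset.range (m + 1),
          Polynomial.C ((m.choose k : ℝ) * b ^ (m - k)) * Q (k + 1) := by ring
    _ = _ := by rw [hU]

/-- The Laurent biorthogonal polynomials are the `b`-th binomial transform of
the orthogonal polynomials `Q̃_n`: `P_n(x) = ∑_{k=0}^n C(n,k) b^{n-k} Q̃_k(x)`. -/
theorem lbp_binomial_transform_of_orth_tilde
    (b c : ℝ) (hb : b ≠ 0) (hc : c ≠ 0)
    (P : ℕ → Polynomial ℝ)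
    (hP0 : P 0 = 1)
    (hP1 : P 1 = Polynomial.X - Polynomial.C c)
    (hP : ∀ n, 2 ≤ n →
      P n = (Polynomial.X - Polynomial.C c) * P (n - 1)
            - Polynomial.C b * Polynomial.X * P (n - 2))
    (Qt : ℕ → Polynomial ℝ)
    (hQt0 : Qt 0 = 1)
    (hQt1 : Qt 1 = Polynomial.X - Polynomial.C (b + c))
    (hQt : ∀ n, 2 ≤ n →
      Qt n = (Polynomial.X - Polynomial.C (2 * b + c)) * Qt (n - 1)
             - Polynomial.C (b * (b + c)) * Qt (n - 2))
    (n : ℕ) :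
    P n = ∑ k ∈ Finset.range (n + 1),
      Polynomial.C ((n.choose k : ℝ) * b ^ (n - k)) * Qt k := by
  -- abbreviations
  set S : ℕ → Polynomial ℝ := fun m =>
    ∑ k ∈ Finset.range (m + 1),
      Polynomial.C ((m.choose k : ℝ) * b ^ (m - k)) * Qt k with hS
  set T : ℕ → Polynomial ℝ := fun m =>
    ∑ k ∈ Finset.range (m + 1),
      Polynomial.C ((m.choose k : ℝ) * b ^ (m - k)) * Qt (k + 1) with hT
  have hSstep : ∀ m, S (m + 1) = Polynomial.C b * S m + T m := fun m =>
    pascal_sum_aux b Qt m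
  have hTstep : ∀ m, T (m + 1) = Polynomial.C b * T m
      + ∑ k ∈ Finset.range (m + 1),
          Polynomial.C ((m.choose k : ℝ) * b ^ (m - k)) * Qt (k + 2) := fun m =>
    pascal_sum_aux b (fun k => Qt (k + 1)) m
  have hT2 : ∀ m, (∑ k ∈ Finset.range (m + 1),
        Polynomial.C ((m.choose k : ℝ) * b ^ (m - k)) * Qt (k + 2))
      = (Polynomial.X - Polynomial.C (2 * b + c)) * T m
        - Polynomial.C (b * (b + c)) * S m := by
    intro m
    have : ∀ k ∈ Finset.range (m + 1),
        Polynomial.C ((m.choose k : ℝ) * b ^ (m - k)) * Qt (k + 2)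
        = (Polynomial.X - Polynomial.C (2 * b + c)) *
            (Polynomial.C ((m.choose k : ℝ) * b ^ (m - k)) * Qt (k + 1))
          - Polynomial.C (b * (b + c)) *
            (Polynomial.C ((m.choose k : ℝ) * b ^ (m - k)) * Qt k) := by
      intro k _
      have h := hQt (k + 2) (by omega)
      simp only [Nat.add_sub_cancel] at h
      have h21 : k + 2 - 1 = k + 1 := by omega
      rw [h21] at h
      rw [h]; ring
    rw [Finset.sum_congr rfl this, Finset.sum_sub_distrib, ← Finset.mul_sum,
      ← Finset.mul_sum]
  -- S satisfies the P recurrence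
  have hSrec : ∀ m, S (m + 2) = (Polynomial.X - Polynomial.C c) * S (m + 1)
      - Polynomial.C b * Polynomial.X * S m := by
    intro m
    have e1 : S (m + 2) = Polynomial.C b * S (m + 1) + T (m + 1) := hSstep (m + 1)
    rw [e1, hTstep m, hT2 m, hSstep m]
    simp only [map_add, map_mul, map_ofNat]
    ring
  -- strong induction
  induction n using Nat.strong_induction_on with
  | _ n ih =>
    match n with
    | 0 => rw [hP0]; simp [hQt0]
    | 1 =>
      rw [hP1]
      simp [Finset.sum_range_succ, hQt0, hQt1, map_add]
      ring
    | (m + 2) =>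
      have h := hP (m + 2) (by omega)
      simp only [Nat.add_sub_cancel] at h
      have h1 : m + 2 - 1 = m + 1 := by omega
      rw [h1] at h
      rw [h, ih (m + 1) (by omega), ih m (by omega)]
      exact (hSrec m).symm
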